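/- Assume: (a) M ∈ ℝ^{N×N} is symmetric positive definite with M-norm ‖Z‖_M² = tr(Zᵀ M Z) and M-inner product ⟨Z, Z̃⟩_M = tr(Zᵀ M Z̃) on ℝ^{N×p}; (b) T : ℝ^{N×p} → ℝ^{N×p} is nonexpansive with respect to ‖·‖_M and S = I − T; (c) Z* satisfies TZ* = Z*; (d) Z^{k−τ},…,Z^k ∈ ℝ^{N×p} with τ ≥ 0, J ⊆ {k−τ,…,k−1}, and Ẑ = Z^k + Σ_{d∈J}(Z^d − Z^{d+1}); (e) η > 0 and Z̄ = Z^k − η·SẐ. Then for every ξ > 0, ⟨SẐ, Z* − Z^k⟩_M ≤ −(1/(2η²))·‖Z^k − Z̄‖_M² + (|J|/(2ξη))·‖Z^k − Z̄‖_M² + (ξ/(2η))·Σ_{d∈J} ‖Z^d − Z^{d+1}‖_M². -/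

import Mathlib

open Matrix

/-- The squared `M`-norm `‖Z‖_M² = tr(Zᵀ M Z)` on `ℝ^{N×p}`. -/
noncomputable def Mnorm2 {N p : ℕ} (M : Matrix (Fin N) (Fin N) ℝ)
    (Z : Matrix (Fin N) (Fin p) ℝ) : ℝ :=
  (Zᵀ * M * Z).trace

/-- The `M`-inner product `⟨Z, Z̃⟩_M = tr(Zᵀ M Z̃)` on `ℝ^{N×p}`. -/
noncomputable def Minner {N p : ℕ} (M : Matrix (Fin N) (Fin N) ℝ)
    (Z Z' : Matrix (Fin N) (Fin p) ℝ) : ℝ :=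
  (Zᵀ * M * Z').trace


section Helpers
variable {N p : ℕ} (M : Matrix (Fin N) (Fin N) ℝ)

lemma Mnorm2_eq' (a : Matrix (Fin N) (Fin p) ℝ) : Mnorm2 M a = Minner M a a := rfl

lemma Minner_add_right' (a b c : Matrix (Fin N) (Fin p) ℝ) :
    Minner M a (b + c) = Minner M a b + Minner M a c := by
  simp [Minner, Matrix.mul_add]

lemma Minner_sub_right' (a b c : Matrix (Fin N) (Fin p) ℝ) :
    Minner M a (b - c) = Minner M a b - Minner M a c := by
  simp [Minner, Matrix.mul_sub]

lemma Minner_sub_left' (a b c : Matrix (Fin N) (Fin p) ℝ) :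
    Minner M (a - b) c = Minner M a c - Minner M b c := by
  simp [Minner, Matrix.sub_mul]

lemma Minner_smul_left' (r : ℝ) (a b : Matrix (Fin N) (Fin p) ℝ) :
    Minner M (r • a) b = r * Minner M a b := by
  simp [Minner, Matrix.smul_mul]

lemma Minner_smul_right' (r : ℝ) (a b : Matrix (Fin N) (Fin p) ℝ) :
    Minner M a (r • b) = r * Minner M a b := by
  simp [Minner, Matrix.mul_smul]

lemma Minner_symm' (hM : M.IsSymm) (a b : Matrix (Fin N) (Fin p) ℝ) :
    Minner M a b = Minner M b a := by
  unfold Minner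
  rw [← Matrix.trace_transpose, Matrix.transpose_mul, Matrix.transpose_mul,
    Matrix.transpose_transpose, hM.eq, Matrix.mul_assoc]

lemma Minner_sum_right' (a : Matrix (Fin N) (Fin p) ℝ) (J : Finset ℕ)
    (f : ℕ → Matrix (Fin N) (Fin p) ℝ) :
    Minner M a (∑ d ∈ J, f d) = ∑ d ∈ J, Minner M a (f d) := by
  classical
  induction J using Finset.induction with
  | empty => simp [Minner]
  | insert _ _ h ih => simp [Finset.sum_insert h, Minner_add_right', ih]

lemma Mnorm2_nonneg' (hM : M.PosDef) (Z : Matrix (Fin N) (Fin p) ℝ) :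
    0 ≤ Mnorm2 M Z := by
  unfold Mnorm2 Matrix.trace
  apply Finset.sum_nonneg
  intro j _
  have h := hM.posSemidef.dotProduct_mulVec_nonneg (fun i => Z i j)
  simp only [RCLike.star_def, starRingEnd_apply, star_trivial, dotProduct,
    Matrix.mulVec, Finset.mul_sum] at h
  simp only [Matrix.mul_apply, Matrix.transpose_apply, Finset.sum_mul, Matrix.diag_apply]
  refine h.trans_eq ?_
  rw [Finset.sum_comm]
  exact Finset.sum_congr rfl fun a _ => Finset.sum_congr rfl fun b _ => by ring

lemma Mnorm2_sub' (hs : M.IsSymm) (u v : Matrix (Fin N) (Fin p) ℝ) :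
    Mnorm2 M (u - v) = Mnorm2 M u - 2 * Minner M u v + Mnorm2 M v := by
  rw [Mnorm2_eq', Minner_sub_left', Minner_sub_right', Minner_sub_right',
    Minner_symm' M hs v u, ← Mnorm2_eq', ← Mnorm2_eq']
  ring

lemma Mnorm2_smul' (r : ℝ) (a : Matrix (Fin N) (Fin p) ℝ) :
    Mnorm2 M (r • a) = r ^ 2 * Mnorm2 M a := by
  rw [Mnorm2_eq', Minner_smul_left', Minner_smul_right', ← Mnorm2_eq']
  ring

end Helpers


/-- **Key cross-term estimate.** `T` is nonexpansive in the `M`-norm with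
residual `S = I - T`, `Z*` is a fixed point of `T`,
`Ẑ = Z^k + Σ_{d∈J}(Z^d - Z^{d+1})` is the delayed iterate with
`J ⊆ {k-τ,…,k-1}`, and `Z̄ = Z^k - η SẐ`.  Then for every `ξ > 0`,
`⟨SẐ, Z* - Z^k⟩_M ≤ -(1/(2η²))‖Z^k - Z̄‖²_M + (|J|/(2ξη))‖Z^k - Z̄‖²_M
  + (ξ/(2η)) Σ_{d∈J} ‖Z^d - Z^{d+1}‖²_M`. -/


theorem cross_term_estimate (N p : ℕ)
    (M : Matrix (Fin N) (Fin N) ℝ) (hM : M.PosDef)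
    (T : Matrix (Fin N) (Fin p) ℝ → Matrix (Fin N) (Fin p) ℝ)
    (hT : ∀ X Y : Matrix (Fin N) (Fin p) ℝ,
      Mnorm2 M (T X - T Y) ≤ Mnorm2 M (X - Y))
    (Zstar : Matrix (Fin N) (Fin p) ℝ) (hfix : T Zstar = Zstar)
    (τ k : ℕ) (hτk : τ ≤ k)
    (Z : ℕ → Matrix (Fin N) (Fin p) ℝ)
    (J : Finset ℕ) (hJ : J ⊆ Finset.Ico (k - τ) k)
    (Zhat : Matrix (Fin N) (Fin p) ℝ)
    (hZhat : Zhat = Z k + ∑ d ∈ J, (Z d - Z (d + 1)))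
    (η : ℝ) (hη : 0 < η)
    (Zbar : Matrix (Fin N) (Fin p) ℝ)
    (hZbar : Zbar = Z k - η • (Zhat - T Zhat))
    (ξ : ℝ) (hξ : 0 < ξ) :
    Minner M (Zhat - T Zhat) (Zstar - Z k)
      ≤ -(1 / (2 * η ^ 2)) * Mnorm2 M (Z k - Zbar)
        + ((J.card : ℝ) / (2 * ξ * η)) * Mnorm2 M (Z k - Zbar)
        + (ξ / (2 * η)) * ∑ d ∈ J, Mnorm2 M (Z d - Z (d + 1)) := by
  have hsymm : M.IsSymm := by
    have h := hM.isHermitian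
    simpa [Matrix.IsHermitian, Matrix.IsSymm, Matrix.conjTranspose_eq_transpose_of_trivial] using h
  set a := Zhat - T Zhat with ha
  set A := Mnorm2 M a with hA
  have hAnn : 0 ≤ A := Mnorm2_nonneg' M hM a
  -- Step 1: A ≤ 2 ⟨Ẑ - Z*, a⟩
  have h1 : A ≤ 2 * Minner M (Zhat - Zstar) a := by
    have h := hT Zhat Zstar
    rw [hfix] at h
    have hid : T Zhat - Zstar = (Zhat - Zstar) - a := by rw [ha]; abel
    rw [hid, Mnorm2_sub' M hsymm] at h
    linarith
  -- Young's inequality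
  have young : ∀ b : Matrix (Fin N) (Fin p) ℝ,
      Minner M a b ≤ η / (2 * ξ) * A + ξ / (2 * η) * Mnorm2 M b := by
    intro b
    have h0 : 0 ≤ Mnorm2 M ((η / ξ) • a - b) := Mnorm2_nonneg' M hM _
    rw [Mnorm2_sub' M hsymm, Mnorm2_smul', Minner_smul_left'] at h0
    have hη' := hη.ne'
    have hξ' := hξ.ne'
    have heq : η / (2 * ξ) * Mnorm2 M a - Minner M a b + ξ / (2 * η) * Mnorm2 M b
        = (ξ / (2 * η)) * ((η / ξ) ^ 2 * Mnorm2 M a - 2 * (η / ξ * Minner M a b) + Mnorm2 M b) := by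
      field_simp
    have h3 : 0 ≤ η / (2 * ξ) * Mnorm2 M a - Minner M a b + ξ / (2 * η) * Mnorm2 M b := by
      rw [heq]
      exact mul_nonneg (by positivity) h0
    linarith [hA]
  -- Decomposition of the inner product
  have hdec : Minner M a (Zstar - Z k)
      = - Minner M (Zhat - Zstar) a + ∑ d ∈ J, Minner M a (Z d - Z (d + 1)) := by
    have hsplit : Zstar - Z k = (Zstar - Zhat) + ∑ d ∈ J, (Z d - Z (d + 1)) := by
      rw [hZhat]; abel
    rw [hsplit, Minner_add_right', Minner_sum_right']
    have : Minner M a (Zstar - Zhat) = - Minner M (Zhat - Zstar) a := by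
      rw [Minner_symm' M hsymm, Minner_sub_left', Minner_sub_left']; ring
    rw [this]
  -- norm of Z k - Zbar
  have hzb : Mnorm2 M (Z k - Zbar) = η ^ 2 * A := by
    have : Z k - Zbar = η • a := by rw [hZbar]; abel
    rw [this, Mnorm2_smul']
  -- sum bound
  have hsum : ∑ d ∈ J, Minner M a (Z d - Z (d + 1))
      ≤ (J.card : ℝ) * (η / (2 * ξ) * A) + ξ / (2 * η) * ∑ d ∈ J, Mnorm2 M (Z d - Z (d + 1)) := by
    calc ∑ d ∈ J, Minner M a (Z d - Z (d + 1))
        ≤ ∑ d ∈ J, (η / (2 * ξ) * A + ξ / (2 * η) * Mnorm2 M (Z d - Z (d + 1))) :=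
          Finset.sum_le_sum fun d _ => young _
      _ = (J.card : ℝ) * (η / (2 * ξ) * A) + ξ / (2 * η) * ∑ d ∈ J, Mnorm2 M (Z d - Z (d + 1)) := by
          rw [Finset.sum_add_distrib, Finset.sum_const, Finset.mul_sum, nsmul_eq_mul]
  have hη' := hη.ne'
  have hξ' := hξ.ne'
  have e3 : -(1 / (2 * η ^ 2)) * (η ^ 2 * A) = -(1 / 2) * A := by field_simp
  have e4 : (J.card : ℝ) / (2 * ξ * η) * (η ^ 2 * A) = (J.card : ℝ) * (η / (2 * ξ) * A) := by
    field_simp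
  rw [hdec, hzb, e3, e4]
  linarith
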